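/- Let X be a compact subspace of the Tychonoff cube [0,1]^{ω₁} (the product of copies of [0,1] indexed by the countable ordinals, with the product topology), and for each α < ω₁ let X_α = p_α[X] be the image of X under the restriction map p_α : [0,1]^{ω₁} → [0,1]^α sending x to x↾α. Let n be a natural number with dim X ≤ n and not dim X ≤ n−1. Then there is a subset C of ω₁ that is closed and unbounded in ω₁ such that for every α ∈ C, dim X_α ≤ n and not dim X_α ≤ n−1. -/

import Mathlib

/-- The covering dimension of `X` is at most `n`: every finite open cover has an open
refinement in which every point belongs to at most `n + 1` members (for `n = -1` this
means `X` is empty). -/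
def CovDimLE (X : Type*) [TopologicalSpace X] (n : ℤ) : Prop :=
  ∀ 𝒰 : Set (Set X), 𝒰.Finite → (∀ U ∈ 𝒰, IsOpen U) → ⋃₀ 𝒰 = Set.univ →
    ∃ 𝒱 : Set (Set X), 𝒱.Finite ∧ (∀ V ∈ 𝒱, IsOpen V) ∧ ⋃₀ 𝒱 = Set.univ ∧
      (∀ V ∈ 𝒱, ∃ U ∈ 𝒰, V ⊆ U) ∧
      ∀ x : X, ({V ∈ 𝒱 | x ∈ V}.ncard : ℤ) ≤ n + 1

/-- The first uncountable ordinal. -/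
noncomputable def omega1 : Ordinal.{0} := (Cardinal.aleph 1).ord


open Set Topology



abbrev Idx := {o : Ordinal.{0} // o < omega1}
abbrev Cube := Idx → unitInterval
abbrev Jdx (α : Ordinal.{0}) := {o : Ordinal.{0} // o < α}

/-- restriction map -/
def resf (α : Ordinal.{0}) (hα : α < omega1) : Cube → (Jdx α → unitInterval) :=
  fun x β => x ⟨β.1, β.2.trans hα⟩

lemma resf_cont (α : Ordinal.{0}) (hα : α < omega1) : Continuous (resf α hα) :=
  continuous_pi fun β => continuous_apply _

def res2f (β α : Ordinal.{0}) (h : β ≤ α) : (Jdx α → unitInterval) → (Jdx β → unitInterval) :=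
  fun y γ => y ⟨γ.1, γ.2.trans_le h⟩

lemma res2f_cont (β α : Ordinal.{0}) (h : β ≤ α) : Continuous (res2f β α h) :=
  continuous_pi fun γ => continuous_apply _

lemma res2f_resf (β α : Ordinal.{0}) (h : β ≤ α) (hα : α < omega1) (hβ : β < omega1) (x : Cube) :
    res2f β α h (resf α hα x) = resf β hβ x := rfl

variable (X : Set Cube)

def projX (α : Ordinal.{0}) (hα : α < omega1) (x : ↥X) : ↥(resf α hα '' X) :=
  ⟨resf α hα x.1, ⟨x.1, x.2, rfl⟩⟩

lemma projX_cont (α : Ordinal.{0}) (hα : α < omega1) : Continuous (projX X α hα) :=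
  Continuous.subtype_mk ((resf_cont α hα).comp continuous_subtype_val) _

lemma projX_surj (α : Ordinal.{0}) (hα : α < omega1) :
    Function.Surjective (projX X α hα) := by
  rintro ⟨y, x, hx, rfl⟩; exact ⟨⟨x, hx⟩, rfl⟩

def projX2 (β α : Ordinal.{0}) (h : β ≤ α) (hα : α < omega1) (hβ : β < omega1)
    (y : ↥(resf α hα '' X)) : ↥(resf β hβ '' X) :=
  ⟨res2f β α h y.1, by obtain ⟨y, x, hx, rfl⟩ := y; exact ⟨x, hx, rfl⟩⟩

lemma projX2_cont (β α : Ordinal.{0}) (h : β ≤ α) (hα : α < omega1) (hβ : β < omega1) :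
    Continuous (projX2 X β α h hα hβ) :=
  Continuous.subtype_mk ((res2f_cont β α h).comp continuous_subtype_val) _

lemma projX2_projX (β α : Ordinal.{0}) (h : β ≤ α) (hα : α < omega1) (hβ : β < omega1) (x : ↥X) :
    projX2 X β α h hα hβ (projX X α hα x) = projX X β hβ x := rfl

/-- countable basis of the unit interval -/
noncomputable def ubase : Set (Set unitInterval) :=
  (TopologicalSpace.exists_countable_basis unitInterval).choose

lemma ubase_countable : ubase.Countable :=
  (TopologicalSpace.exists_countable_basis unitInterval).choose_spec.1

lemma ubase_basis : TopologicalSpace.IsTopologicalBasis ubase :=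
  (TopologicalSpace.exists_countable_basis unitInterval).choose_spec.2.2

lemma ubase_isOpen {s : Set unitInterval} (h : s ∈ ubase) : IsOpen s :=
  ubase_basis.isOpen h

/-- cylinder set in a product -/
def cylPi {κ : Type*} (t : Set (κ × Set unitInterval)) : Set (κ → unitInterval) :=
  {y | ∀ p ∈ t, y p.1 ∈ p.2}

lemma cylPi_eq {κ : Type*} (t : Set (κ × Set unitInterval)) :
    cylPi t = ⋂ p ∈ t, (fun y : κ → unitInterval => y p.1) ⁻¹' p.2 := by
  ext y; simp [cylPi]

lemma cylPi_isOpen {κ : Type*} {t : Set (κ × Set unitInterval)} (ht : t.Finite)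
    (hb : ∀ p ∈ t, p.2 ∈ ubase) : IsOpen (cylPi t) := by
  rw [cylPi_eq]
  exact ht.isOpen_biInter fun p hp =>
    (ubase_isOpen (hb p hp)).preimage (continuous_apply p.1)

/-- key ncard comparison -/
lemma key_ncard {A B : Type*} {s : Set A} (hs : s.Finite) (g : A → B) (Q : B → Prop)
    (R : A → Prop) (h : ∀ a ∈ s, Q (g a) → R a) :
    {b ∈ g '' s | Q b}.ncard ≤ {a ∈ s | R a}.ncard := by
  have h1 : {b ∈ g '' s | Q b} ⊆ g '' {a ∈ s | R a} := by
    rintro b ⟨⟨a, ha, rfl⟩, hQ⟩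
    exact ⟨a, ⟨ha, h a ha hQ⟩, rfl⟩
  calc {b ∈ g '' s | Q b}.ncard ≤ (g '' {a ∈ s | R a}).ncard :=
        Set.ncard_le_ncard h1 ((hs.subset (sep_subset _ _)).image g)
    _ ≤ {a ∈ s | R a}.ncard := Set.ncard_image_le (hs.subset (sep_subset _ _))

/-- pulling back a cover along a continuous map -/
lemma pullback_cover {Y Z : Type*} [TopologicalSpace Y] [TopologicalSpace Z]
    {f : Y → Z} (hf : Continuous f) {𝒪 : Set (Set Z)} (m : ℤ) (h1 : 𝒪.Finite)
    (h2 : ∀ O ∈ 𝒪, IsOpen O) (h3 : ⋃₀ 𝒪 = univ)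
    (h4 : ∀ z, ({O ∈ 𝒪 | z ∈ O}.ncard : ℤ) ≤ m) :
    ((f ⁻¹' ·) '' 𝒪).Finite ∧ (∀ V ∈ (f ⁻¹' ·) '' 𝒪, IsOpen V) ∧
      ⋃₀ ((f ⁻¹' ·) '' 𝒪) = univ ∧
      ∀ y, (({V ∈ (f ⁻¹' ·) '' 𝒪 | y ∈ V}).ncard : ℤ) ≤ m := by
  refine ⟨h1.image _, ?_, ?_, ?_⟩
  · rintro V ⟨O, hO, rfl⟩; exact (h2 O hO).preimage hf
  · rw [sUnion_image]
    ext y; simp only [mem_iUnion, mem_univ, iff_true]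
    have : f y ∈ ⋃₀ 𝒪 := h3 ▸ mem_univ _
    obtain ⟨O, hO, hyO⟩ := this
    exact ⟨O, hO, hyO⟩
  · intro y
    calc ({V ∈ (f ⁻¹' ·) '' 𝒪 | y ∈ V}.ncard : ℤ)
        ≤ ({O ∈ 𝒪 | f y ∈ O}.ncard : ℤ) := by
          have := key_ncard h1 (f ⁻¹' ·) (fun V => y ∈ V) (fun O => f y ∈ O) fun O _ h => h
          exact_mod_cast this
      _ ≤ m := h4 (f y)

lemma sUnion_preimage_univ {Y Z : Type*} {f : Y → Z} {𝒪 : Set (Set Z)}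
    (h3 : ⋃₀ 𝒪 = univ) : ⋃₀ ((f ⁻¹' ·) '' 𝒪) = univ := by
  rw [sUnion_image]
  ext y; simp only [mem_iUnion, mem_univ, iff_true]
  have : f y ∈ ⋃₀ 𝒪 := h3 ▸ mem_univ _
  obtain ⟨O, hO, hyO⟩ := this
  exact ⟨O, hO, hyO⟩

/-- bounding a finite set of ordinals strictly below a "limit" -/
lemma finite_bound {α : Ordinal.{u}} {A : Set Ordinal.{u}} (hA : A.Finite)
    (h0 : 0 < α) (hsucc : ∀ β < α, β + 1 < α) (hlt : ∀ a ∈ A, a < α) :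
    ∃ β < α, ∀ a ∈ A, a < β := by
  refine ⟨hA.toFinset.sup (· + 1), ?_, ?_⟩
  · rw [Finset.sup_lt_iff h0]
    intro a ha; exact hsucc a (hlt a (hA.mem_toFinset.mp ha))
  · intro a ha
    exact lt_of_lt_of_le (Order.lt_succ a |>.trans_eq (Ordinal.add_one_eq_succ a).symm)
      (Finset.le_sup (hA.mem_toFinset.mpr ha))

variable (X : Set Cube)

/-- cylinder subsets of the subspace X -/
def cylSet (t : Set (Idx × Set unitInterval)) : Set ↥X :=
  (fun x : ↥X => x.1) ⁻¹' cylPi t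

lemma cylSet_isOpen {t : Set (Idx × Set unitInterval)} (ht : t.Finite)
    (hb : ∀ p ∈ t, p.2 ∈ ubase) : IsOpen (cylSet X t) :=
  (cylPi_isOpen ht hb).preimage continuous_subtype_val

/-- pointwise basic-cylinder refinement inside an open set pulled back from stage α -/
lemma exists_cyl_basic_lt {α : Ordinal.{0}} (hα : α < omega1)
    {G : Set (Jdx α → unitInterval)} (hG : IsOpen G) {x : ↥X}
    (hx : resf α hα x.1 ∈ G) :
    ∃ t : Set (Idx × Set unitInterval), t.Finite ∧ (∀ p ∈ t, p.1.1 < α ∧ p.2 ∈ ubase) ∧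
      x ∈ cylSet X t ∧ cylSet X t ⊆ (fun z : ↥X => resf α hα z.1) ⁻¹' G := by
  obtain ⟨F, u, hu, hpi⟩ := isOpen_pi_iff.mp hG (resf α hα x.1) hx
  choose b hb hxb hbu using fun (a : Jdx α) (ha : a ∈ F) =>
    ubase_basis.exists_subset_of_mem_open (hu a ha).2 (hu a ha).1
  classical
  refine ⟨(fun a : {a : Jdx α // a ∈ F} =>
      ((⟨a.1.1, a.1.2.trans hα⟩ : Idx), b a.1 a.2)) '' univ, ?_, ?_, ?_, ?_⟩
  · exact (finite_univ.image _)
  · rintro p ⟨a, -, rfl⟩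
    exact ⟨a.1.2, hb a.1 a.2⟩
  · rintro p ⟨a, -, rfl⟩
    exact hxb a.1 a.2
  · intro z hz
    refine hpi ?_
    intro a ha
    have := hz (((⟨a.1, a.2.trans hα⟩ : Idx), b a ha)) ⟨⟨a, ha⟩, mem_univ _, rfl⟩
    exact hbu a ha this

/-- pointwise basic-cylinder refinement inside any open subset of X -/
lemma exists_cyl_basic {W : Set ↥X} (hW : IsOpen W) {x : ↥X} (hx : x ∈ W) :
    ∃ t : Set (Idx × Set unitInterval), t.Finite ∧ (∀ p ∈ t, p.2 ∈ ubase) ∧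
      x ∈ cylSet X t ∧ cylSet X t ⊆ W := by
  obtain ⟨G, hG, rfl⟩ := isOpen_induced_iff.mp hW
  obtain ⟨F, u, hu, hpi⟩ := isOpen_pi_iff.mp hG x.1 hx
  choose b hb hxb hbu using fun (a : Idx) (ha : a ∈ F) =>
    ubase_basis.exists_subset_of_mem_open (hu a ha).2 (hu a ha).1
  refine ⟨(fun a : {a : Idx // a ∈ F} => (a.1, b a.1 a.2)) '' univ, ?_, ?_, ?_, ?_⟩
  · exact finite_univ.image _
  · rintro p ⟨a, -, rfl⟩
    exact hb a.1 a.2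
  · rintro p ⟨a, -, rfl⟩
    exact hxb a.1 a.2
  · intro z hz
    refine hpi ?_
    intro a ha
    exact hbu a ha (hz ((a, b a ha)) ⟨⟨a, ha⟩, mem_univ _, rfl⟩)

/-- mapping a cylinder code down to stage β -/
def mapdown (β : Ordinal.{0}) (t : Set (Idx × Set unitInterval)) :
    Set (Jdx β × Set unitInterval) :=
  {q | ∃ p ∈ t, p.1.1 = q.1.1 ∧ p.2 = q.2}

lemma mapdown_eq_preimage (β : Ordinal.{0}) (hβ : β < omega1)
    (t : Set (Idx × Set unitInterval)) :
    mapdown β t = (fun q : Jdx β × Set unitInterval =>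
      ((⟨q.1.1, q.1.2.trans hβ⟩ : Idx), q.2)) ⁻¹' t := by
  ext q
  constructor
  · rintro ⟨p, hp, h1, h2⟩
    have hmem : ((⟨q.1.1, h1 ▸ p.1.2⟩ : Idx), q.2) ∈ t := by
      have : p = ((⟨q.1.1, h1 ▸ p.1.2⟩ : Idx), q.2) := by
        refine Prod.ext (Subtype.ext h1) h2
      exact this ▸ hp
    exact hmem
  · intro h
    exact ⟨_, h, rfl, rfl⟩

lemma mapdown_finite {β : Ordinal.{0}} (hβ : β < omega1)
    {t : Set (Idx × Set unitInterval)} (ht : t.Finite) : (mapdown β t).Finite := by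
  rw [mapdown_eq_preimage β hβ]
  apply ht.preimage
  intro q _ q' _ h
  simp only at h
  have h1 : q.1.1 = q'.1.1 := congrArg (fun p : Idx × Set unitInterval => (Prod.fst p).1) h
  have h2 : q.2 = q'.2 := congrArg (fun r : Idx × Set unitInterval => r.2) h
  exact Prod.ext (Subtype.ext h1) h2

lemma mapdown_base {β : Ordinal.{0}} {t : Set (Idx × Set unitInterval)}
    (hb : ∀ p ∈ t, p.2 ∈ ubase) : ∀ q ∈ mapdown β t, q.2 ∈ ubase := by
  rintro q ⟨p, hp, -, h2⟩
  exact h2 ▸ hb p hp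

/-- the crucial pull-back identity -/
lemma resf_preimage_cylPi {β : Ordinal.{0}} (hβ : β < omega1)
    {t : Set (Idx × Set unitInterval)} (hcoord : ∀ p ∈ t, p.1.1 < β) :
    (fun x : ↥X => resf β hβ x.1) ⁻¹' cylPi (mapdown β t) = cylSet X t := by
  ext x
  constructor
  · intro h p hp
    have := h (((⟨p.1.1, hcoord p hp⟩ : Jdx β), p.2)) ⟨p, hp, rfl, rfl⟩
    exact this
  · rintro h q ⟨p, hp, h1, h2⟩
    have hx1 : x.1 ⟨q.1.1, q.1.2.trans hβ⟩ ∈ q.2 := by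
      have he : (⟨q.1.1, q.1.2.trans hβ⟩ : Idx) = p.1 := Subtype.ext h1.symm
      rw [he, ← h2]
      exact h p hp
    exact hx1

/-- countable family of basic cylinder subsets of X with coordinates below β -/
def Cyls (β : Ordinal.{0}) : Set (Set ↥X) :=
  cylSet X '' {t | t.Finite ∧ t ⊆ {i : Idx | i.1 < β} ×ˢ ubase}

lemma Jdx_countable {β : Ordinal.{0}} (hβ : β < omega1) : Countable (Jdx β) := by
  have hio : (Set.Iio β).Countable := by
    rw [Cardinal.countable_iff_lt_aleph_one]
    have h1 : Cardinal.mk ↑(Set.Iio β) = Cardinal.lift.{1} β.card := Ordinal.mk_Iio_ordinal β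
    have h2 : β.card < Cardinal.aleph 1 := Cardinal.lt_ord.mp hβ
    have h3 := (Cardinal.lift_lt.{0,1}).mpr h2
    rw [Cardinal.lift_aleph] at h3
    simpa [h1] using h3
  exact hio.to_subtype
lemma cyls_countable {β : Ordinal.{0}} (hβ : β < omega1) : (Cyls X β).Countable := by
  apply Set.Countable.image
  apply Set.Countable.mono (subset_refl _)
  have hc1 : ({i : Idx | i.1 < β}).Countable := by
    haveI := Jdx_countable hβ
    have hinj : Function.Injective (fun i : {i : Idx | i.1 < β} => (⟨i.1.1, i.2⟩ : Jdx β)) := by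
      intro i j h
      have : i.1.1 = j.1.1 := congrArg (fun q : Jdx β => q.1) h
      exact Subtype.ext (Subtype.ext this)
    exact Set.countable_coe_iff.mp hinj.countable
  have := Set.countable_setOf_finite_subset (hc1.prod ubase_countable)
  apply this.mono
  rintro t ⟨h1, h2⟩
  exact ⟨h1, h2⟩

lemma cyls_isOpen {β : Ordinal.{0}} {S : Set ↥X} (hS : S ∈ Cyls X β) : IsOpen S := by
  obtain ⟨t, ⟨ht, hsub⟩, rfl⟩ := hS
  exact cylSet_isOpen X ht fun p hp => (hsub hp).2

lemma cyls_mono {β β' : Ordinal.{0}} (h : β ≤ β') : Cyls X β ⊆ Cyls X β' := by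
  rintro S ⟨t, ⟨ht, hsub⟩, rfl⟩
  exact ⟨t, ⟨ht, hsub.trans (prod_mono_left (fun i hi => lt_of_lt_of_le hi h))⟩, rfl⟩

lemma omega1_isLimit : Order.IsSuccLimit omega1 :=
  Cardinal.isSuccLimit_ord (Cardinal.aleph0_le_aleph 1)

lemma omega1_pos : (0 : Ordinal.{0}) < omega1 := omega1_isLimit.pos

lemma omega1_succ_lt {β : Ordinal.{0}} (h : β < omega1) : β + 1 < omega1 := by
  have := omega1_isLimit.succ_lt h
  rwa [Ordinal.add_one_eq_succ]

/-- Core lemma: every finite open cover of X pushes down to a countable stage,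
with order controlled by the dimension of X. -/
lemma ML (hX : IsCompact X) {m : ℤ} (hdim : CovDimLE ↥X m)
    (𝒰 : Set (Set ↥X)) (hfin : 𝒰.Finite) (hop : ∀ U ∈ 𝒰, IsOpen U) (hcov : ⋃₀ 𝒰 = univ) :
    ∃ β, ∃ hβ : β < omega1, ∃ 𝒪 : Set (Set ↥(resf β hβ '' X)),
      𝒪.Finite ∧ (∀ O ∈ 𝒪, IsOpen O) ∧ ⋃₀ 𝒪 = univ ∧
      (∀ y, ({O ∈ 𝒪 | y ∈ O}.ncard : ℤ) ≤ m + 1) ∧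
      ∀ O ∈ 𝒪, ∃ U ∈ 𝒰, (projX X β hβ) ⁻¹' O ⊆ U := by
  obtain ⟨𝒱, hVfin, hVop, hVcov, hVref, hVord⟩ := hdim 𝒰 hfin hop hcov
  haveI : CompactSpace ↥X := isCompact_iff_compactSpace.mp hX
  haveI : Finite ↥𝒱 := hVfin.to_subtype
  have hcover : (univ : Set ↥X) ⊆ ⋃ i : ↥𝒱, (i : Set ↥X) := by
    rw [← Set.sUnion_eq_iUnion, hVcov]
  obtain ⟨v, hv_cov, hv_open, hv_cl⟩ := exists_subset_iUnion_closure_subset isClosed_univ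
    (fun i : ↥𝒱 => hVop i i.2) (fun x _ => Set.toFinite _) hcover
  choose T hT1 hT2 hT3 hT4 using
    fun (i : ↥𝒱) (z : ↥X) (hz : z ∈ (i : Set ↥X)) => exists_cyl_basic X (hVop i.1 i.2) hz
  -- compactness: finitely many cylinders cover each closure (v i)
  have hK : ∀ i : ↥𝒱, IsCompact (closure (v i)) := fun i => isClosed_closure.isCompact
  have hsub : ∀ i : ↥𝒱, ∃ s : Finset ↥(closure (v i)),
      closure (v i) ⊆ ⋃ z ∈ s, cylSet X (T i z.1 (hv_cl i z.2)) := by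
    intro i
    apply (hK i).elim_finite_subcover
      (fun z : ↥(closure (v i)) => cylSet X (T i z.1 (hv_cl i z.2)))
    · intro z
      exact cylSet_isOpen X (hT1 _ _ _) (hT2 _ _ _)
    · intro x hx
      exact mem_iUnion.mpr ⟨⟨x, hx⟩, hT3 i x (hv_cl i hx)⟩
  choose s hs using hsub
  -- the codes used for each i
  set 𝒯 : ↥𝒱 → Set (Set (Idx × Set unitInterval)) :=
    fun i => (fun z : ↥(closure (v i)) => T i z.1 (hv_cl i z.2)) '' ↑(s i) with h𝒯
  have h𝒯fin : ∀ i, (𝒯 i).Finite := fun i => ((s i).finite_toSet).image _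
  have h𝒯each : ∀ i, ∀ t ∈ 𝒯 i, t.Finite ∧ (∀ p ∈ t, p.2 ∈ ubase) ∧
      cylSet X t ⊆ (i : Set ↥X) := by
    rintro i t ⟨z, hz, rfl⟩
    exact ⟨hT1 _ _ _, hT2 _ _ _, hT4 _ _ _⟩
  -- bound the coordinates
  have hA : (⋃ i : ↥𝒱, ⋃ t ∈ 𝒯 i, (fun p : Idx × Set unitInterval => p.1.1) '' t).Finite := by
    apply Set.finite_iUnion
    intro i
    apply Set.Finite.biUnion (h𝒯fin i)
    intro t ht
    exact ((h𝒯each i t ht).1).image _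
  obtain ⟨β, hβw, hbound⟩ := finite_bound hA omega1_pos (fun b hb => omega1_succ_lt hb)
    (by rintro a ⟨Bi, ⟨i, rfl⟩, hBa⟩
        simp only [mem_iUnion] at hBa
        obtain ⟨t, ht, p, hp, rfl⟩ := hBa
        exact p.1.2)
  have hcoord : ∀ i, ∀ t ∈ 𝒯 i, ∀ p ∈ t, p.1.1 < β := by
    intro i t ht p hp
    apply hbound
    exact mem_iUnion.mpr ⟨i, mem_iUnion.mpr ⟨t, mem_iUnion.mpr ⟨ht, ⟨p, hp, rfl⟩⟩⟩⟩
  -- downstairs cover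
  set D : Set (Idx × Set unitInterval) → Set ↥(resf β hβw '' X) :=
    fun t => Subtype.val ⁻¹' cylPi (mapdown β t) with hD
  set O_ : ↥𝒱 → Set ↥(resf β hβw '' X) := fun i => ⋃ t ∈ 𝒯 i, D t with hO_
  have key : ∀ i, projX X β hβw ⁻¹' O_ i = ⋃ t ∈ 𝒯 i, cylSet X t := by
    intro i
    rw [hO_]
    simp only [preimage_iUnion]
    apply iUnion_congr; intro t; apply iUnion_congr; intro ht
    have : projX X β hβw ⁻¹' D t = (fun x : ↥X => resf β hβw x.1) ⁻¹' cylPi (mapdown β t) := rfl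
    rw [this]
    exact resf_preimage_cylPi X hβw (hcoord i t ht)
  have hWsub : ∀ i, projX X β hβw ⁻¹' O_ i ⊆ (i : Set ↥X) := by
    intro i
    rw [key i]
    apply iUnion₂_subset
    intro t ht
    exact (h𝒯each i t ht).2.2
  have hWcov : ∀ x : ↥X, ∃ i, x ∈ projX X β hβw ⁻¹' O_ i := by
    intro x
    obtain ⟨i, hi⟩ := mem_iUnion.mp (hv_cov (mem_univ x))
    refine ⟨i, ?_⟩
    rw [key i]
    have hxcl : x ∈ closure (v i) := subset_closure hi
    have := hs i hxcl
    simp only [mem_iUnion] at this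
    obtain ⟨z, hz, hmem⟩ := this
    exact mem_iUnion.mpr ⟨T i z.1 (hv_cl i z.2), mem_iUnion.mpr ⟨⟨z, hz, rfl⟩, hmem⟩⟩
  refine ⟨β, hβw, O_ '' univ, (finite_univ.image _), ?_, ?_, ?_, ?_⟩
  · rintro O ⟨i, -, rfl⟩
    apply isOpen_biUnion
    intro t ht
    exact (cylPi_isOpen (mapdown_finite hβw (h𝒯each i t ht).1)
      (mapdown_base (h𝒯each i t ht).2.1)).preimage continuous_subtype_val
  · ext y
    simp only [mem_univ, iff_true]
    obtain ⟨x, rfl⟩ := projX_surj X β hβw y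
    obtain ⟨i, hi⟩ := hWcov x
    exact ⟨O_ i, ⟨i, mem_univ _, rfl⟩, hi⟩
  · intro y
    obtain ⟨x, rfl⟩ := projX_surj X β hβw y
    have h1 : {O ∈ O_ '' univ | projX X β hβw x ∈ O}.ncard ≤
        {i : ↥𝒱 | i ∈ univ ∧ x ∈ (i : Set ↥X)}.ncard :=
      key_ncard finite_univ O_ (fun O => projX X β hβw x ∈ O)
        (fun i => x ∈ (i : Set ↥X)) (fun i _ h => hWsub i h)
    have h2 : {i : ↥𝒱 | i ∈ univ ∧ x ∈ (i : Set ↥X)}.ncard = {V ∈ 𝒱 | x ∈ V}.ncard := by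
      have himg : (Subtype.val '' {i : ↥𝒱 | i ∈ univ ∧ x ∈ (i : Set ↥X)}) = {V ∈ 𝒱 | x ∈ V} := by
        ext V
        constructor
        · rintro ⟨i, ⟨-, hx⟩, rfl⟩; exact ⟨i.2, hx⟩
        · rintro ⟨hV, hx⟩; exact ⟨⟨V, hV⟩, ⟨mem_univ _, hx⟩, rfl⟩
      rw [← himg, Set.ncard_image_of_injective _ Subtype.val_injective]
    calc ({O ∈ O_ '' univ | projX X β hβw x ∈ O}.ncard : ℤ)
        ≤ ({V ∈ 𝒱 | x ∈ V}.ncard : ℤ) := by exact_mod_cast h2 ▸ h1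
      _ ≤ m + 1 := hVord x
  · rintro O ⟨i, -, rfl⟩
    obtain ⟨U, hU, hiU⟩ := hVref i.1 i.2
    exact ⟨U, hU, (hWsub i).trans hiU⟩

/-- Basis refinement: a finite cover of X by sets pulled back from stage α (a limit)
refines to a finite cover by basic cylinders with coordinates below some β < α. -/
lemma BR (hX : IsCompact X) {α : Ordinal.{0}} (hα : α < omega1) (h0 : 0 < α)
    (hsucc : ∀ β < α, β + 1 < α)
    (𝒰 : Set (Set ↥X)) (hcov : ⋃₀ 𝒰 = univ)
    (hform : ∀ U ∈ 𝒰, ∃ G : Set (Jdx α → unitInterval), IsOpen G ∧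
      U = (fun z : ↥X => resf α hα z.1) ⁻¹' G) :
    ∃ β < α, ∃ 𝒞 : Set (Set ↥X), 𝒞.Finite ∧ 𝒞 ⊆ Cyls X β ∧ ⋃₀ 𝒞 = univ ∧
      ∀ S ∈ 𝒞, ∃ U ∈ 𝒰, S ⊆ U := by
  haveI : CompactSpace ↥X := isCompact_iff_compactSpace.mp hX
  have hmem : ∀ x : ↥X, ∃ U ∈ 𝒰, x ∈ U := by
    intro x
    have : x ∈ ⋃₀ 𝒰 := hcov ▸ mem_univ x
    exact this
  choose U hU hxU using hmem
  choose G hGop hGeq using fun x : ↥X => hform (U x) (hU x)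
  have hresf : ∀ x : ↥X, resf α hα x.1 ∈ G x := by
    intro x
    have := hxU x
    rw [hGeq x] at this
    exact this
  choose t ht1 ht2 ht3 ht4 using fun x : ↥X => exists_cyl_basic_lt X hα (hGop x) (hresf x)
  obtain ⟨s, hs⟩ := isCompact_univ.elim_finite_subcover (fun x : ↥X => cylSet X (t x))
    (fun x => cylSet_isOpen X (ht1 x) (fun p hp => (ht2 x p hp).2))
    (fun x _ => mem_iUnion.mpr ⟨x, ht3 x⟩)
  have hA : (⋃ z ∈ s, (fun p : Idx × Set unitInterval => p.1.1) '' t z).Finite :=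
    s.finite_toSet.biUnion fun z _ => (ht1 z).image _
  obtain ⟨β, hβα, hbound⟩ := finite_bound hA h0 hsucc
    (by rintro a ⟨B, ⟨z, rfl⟩, hB⟩
        simp only [mem_iUnion] at hB
        obtain ⟨hz, p, hp, rfl⟩ := hB
        exact (ht2 z p hp).1)
  refine ⟨β, hβα, (fun z : ↥X => cylSet X (t z)) '' ↑s, s.finite_toSet.image _, ?_, ?_, ?_⟩
  · rintro S ⟨z, hz, rfl⟩
    refine ⟨t z, ⟨ht1 z, ?_⟩, rfl⟩
    intro p hp
    refine ⟨hbound _ (mem_iUnion.mpr ⟨z, mem_iUnion.mpr ⟨hz, ⟨p, hp, rfl⟩⟩⟩), (ht2 z p hp).2⟩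
  · apply eq_univ_of_univ_subset
    intro x hx
    obtain ⟨z, hz⟩ := mem_iUnion.mp (hs hx)
    simp only [mem_iUnion] at hz
    obtain ⟨hzs, hxz⟩ := hz
    exact ⟨cylSet X (t z), ⟨z, hzs, rfl⟩, hxz⟩
  · rintro S ⟨z, hz, rfl⟩
    refine ⟨U z, hU z, ?_⟩
    rw [hGeq z]
    exact ht4 z

lemma ctble_iSup_lt {ι : Type*} [Countable ι] (f : ι → Ordinal.{0}) (h : ∀ i, f i < omega1) :
    iSup f < omega1 := by
  haveI : Small.{0} ι := inferInstance
  have hre : iSup f = ⨆ j : Shrink.{0} ι, f ((equivShrink ι).symm j) := by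
    rw [iSup, iSup]
    congr 1
    exact ((equivShrink ι).symm.surjective.range_comp f).symm
  rw [hre]
  have homega : omega1 = (Cardinal.aleph 1).ord := rfl
  rw [homega]
  haveI : Countable (Shrink.{0} ι) := Countable.of_equiv ι (equivShrink ι)
  apply Ordinal.iSup_lt_ord_lift
  · rw [Cardinal.isRegular_aleph_one.cof_eq, Cardinal.lift_id]
    exact lt_of_le_of_lt Cardinal.mk_le_aleph0 Cardinal.aleph0_lt_aleph_one
  · intro i; exact h _


/-- For a compact subspace `X` of the Tychonoff cube `[0,1]^{ω₁}` of dimension exactly `n`,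
there is a closed unbounded set `C` of countable ordinals such that the projection `X_α`
of `X` onto the first `α` coordinates has dimension exactly `n` for every `α ∈ C`. -/
theorem statement7 (n : ℕ)
    (X : Set ({o : Ordinal.{0} // o < omega1} → unitInterval))
    (hX : IsCompact X)
    (hdim : CovDimLE ↥X (n : ℤ)) (hdim' : ¬ CovDimLE ↥X ((n : ℤ) - 1)) :
    ∃ C : Set Ordinal.{0}, C ⊆ Set.Iio omega1 ∧
      (∀ α < omega1, ∃ β ∈ C, α < β) ∧
      (∀ S : Set Ordinal.{0}, S ⊆ C → S.Nonempty → sSup S < omega1 → sSup S ∈ C) ∧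
      ∀ α, ∀ hα : α < omega1, α ∈ C →
        CovDimLE
          ↥((fun (x : {o : Ordinal.{0} // o < omega1} → unitInterval)
              (β : {o : Ordinal.{0} // o < α}) => x ⟨β.1, β.2.trans hα⟩) '' X) (n : ℤ) ∧
        ¬ CovDimLE
          ↥((fun (x : {o : Ordinal.{0} // o < omega1} → unitInterval)
              (β : {o : Ordinal.{0} // o < α}) => x ⟨β.1, β.2.trans hα⟩) '' X)
          ((n : ℤ) - 1) := by
  classical
  -- the bad cover witnessing dim X > n - 1
  have hbad : ∃ 𝒰 : Set (Set ↥X), 𝒰.Finite ∧ (∀ U ∈ 𝒰, IsOpen U) ∧ ⋃₀ 𝒰 = univ ∧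
      ∀ 𝒱 : Set (Set ↥X), 𝒱.Finite → (∀ V ∈ 𝒱, IsOpen V) → ⋃₀ 𝒱 = univ →
        (∀ V ∈ 𝒱, ∃ U ∈ 𝒰, V ⊆ U) →
        ¬(∀ x : ↥X, ({V ∈ 𝒱 | x ∈ V}.ncard : ℤ) ≤ ((n : ℤ) - 1) + 1) := by
    by_contra h
    push_neg at h
    apply hdim'
    intro 𝒰 h1 h2 h3
    by_contra hno
    obtain ⟨𝒱, g1, g2, g3, g4, g5⟩ := h 𝒰 h1 h2 h3
    exact hno ⟨𝒱, g1, g2, g3, g4, g5⟩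
  obtain ⟨𝒰₀, hU0fin, hU0op, hU0cov, hU0bad⟩ := hbad
  obtain ⟨α₀, hα₀, 𝒪₀, hO0fin, hO0op, hO0cov, -, hO0ref⟩ :=
    ML X hX hdim 𝒰₀ hU0fin hU0op hU0cov
  -- the stage function from ML
  have hML : ∀ 𝒞 : Set (Set ↥X),
      (𝒞.Finite ∧ (∀ S ∈ 𝒞, IsOpen S) ∧ ⋃₀ 𝒞 = univ) →
      ∃ β, ∃ hβ : β < omega1, ∃ 𝒪 : Set (Set ↥(resf β hβ '' X)),
        𝒪.Finite ∧ (∀ O ∈ 𝒪, IsOpen O) ∧ ⋃₀ 𝒪 = univ ∧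
        (∀ y, ({O ∈ 𝒪 | y ∈ O}.ncard : ℤ) ≤ (n : ℤ) + 1) ∧
        ∀ O ∈ 𝒪, ∃ U ∈ 𝒞, (projX X β hβ) ⁻¹' O ⊆ U :=
    fun 𝒞 h => ML X hX hdim 𝒞 h.1 h.2.1 h.2.2
  choose Gf hGlt 𝒪f h𝒪fin h𝒪op h𝒪cov h𝒪ord h𝒪ref using hML
  set Good : Set (Set ↥X) → Prop :=
    fun 𝒞 => 𝒞.Finite ∧ (∀ S ∈ 𝒞, IsOpen S) ∧ ⋃₀ 𝒞 = univ with hGoodDef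
  set G : Set (Set ↥X) → Ordinal.{0} :=
    fun 𝒞 => if h : Good 𝒞 then Gf 𝒞 h else 0 with hGdef
  set CovFam : Ordinal.{0} → Set (Set (Set ↥X)) :=
    fun β => {𝒞 | 𝒞 ⊆ Cyls X β ∧ Good 𝒞} with hCovFam
  have hCovCt : ∀ β, β < omega1 → (CovFam β).Countable := by
    intro β hβ
    apply (Set.countable_setOf_finite_subset (cyls_countable X hβ)).mono
    rintro 𝒞 ⟨hsub, hGood⟩
    exact ⟨hGood.1, hsub⟩
  set g : Ordinal.{0} → Ordinal.{0} :=
    fun β => max (⨆ 𝒞 : ↥(CovFam β), G 𝒞.1) (β + 1) with hgdef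
  have hg1 : ∀ β, β < omega1 → g β < omega1 := by
    intro β hβ
    apply max_lt ?_ (omega1_succ_lt hβ)
    haveI := (hCovCt β hβ).to_subtype
    apply ctble_iSup_lt
    rintro ⟨𝒞, hsub, hGood⟩
    show G 𝒞 < omega1
    rw [hGdef]
    simp only [dif_pos hGood]
    exact hGlt 𝒞 hGood
  have hgsucc : ∀ β, β + 1 ≤ g β := fun β => le_max_right _ _
  have hgmono : ∀ β β', β ≤ β' → β' < omega1 → g β ≤ g β' := by
    intro β β' hle hβ'
    haveI := (hCovCt β' hβ').to_subtype
    apply max_le_max ?_ (by simpa using hle)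
    apply Ordinal.iSup_le
    rintro ⟨𝒞, hsub, hGood⟩
    exact Ordinal.le_iSup (fun 𝒞 : ↥(CovFam β') => G 𝒞.1)
      ⟨𝒞, hsub.trans (cyls_mono X hle), hGood⟩
  refine ⟨{α | α₀ < α ∧ α < omega1 ∧ ∀ β < α, g β < α}, ?_, ?_, ?_, ?_⟩
  · exact fun α hα => hα.2.1
  · -- unbounded
    intro δ hδ
    set seq : ℕ → Ordinal.{0} :=
      fun k => Nat.rec (max δ α₀ + 1) (fun _ ih => max (g ih) (ih + 1)) k with hseq
    have hseq0 : seq 0 = max δ α₀ + 1 := rfl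
    have hseqS : ∀ k, seq (k + 1) = max (g (seq k)) (seq k + 1) := fun k => rfl
    have hseqlt : ∀ k, seq k < omega1 := by
      intro k
      induction k with
      | zero => rw [hseq0]; exact omega1_succ_lt (max_lt hδ hα₀)
      | succ k ih => rw [hseqS]; exact max_lt (hg1 _ ih) (omega1_succ_lt ih)
    have hseqmono : ∀ k, seq k < seq (k + 1) := by
      intro k
      rw [hseqS]
      have h1 : seq k < seq k + 1 := by
        rw [Ordinal.add_one_eq_succ]; exact Order.lt_succ _
      exact h1.trans_le (le_max_right _ _)
    have hstrict : StrictMono seq := strictMono_nat_of_lt_succ hseqmono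
    have hαup : (⨆ k, seq k) < omega1 := ctble_iSup_lt seq hseqlt
    refine ⟨⨆ k, seq k, ⟨?_, hαup, ?_⟩, ?_⟩
    · have h1 : α₀ < seq 0 := by
        rw [hseq0]
        exact lt_of_le_of_lt (le_max_right δ α₀)
          (by rw [Ordinal.add_one_eq_succ]; exact Order.lt_succ _)
      exact h1.trans_le (Ordinal.le_iSup seq 0)
    · intro β hβ
      obtain ⟨k, hk⟩ := Ordinal.lt_iSup_iff.mp hβ
      have h1 : g β ≤ g (seq k) := hgmono β (seq k) (le_of_lt hk) (hseqlt k)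
      have h2 : g (seq k) ≤ seq (k + 1) := by rw [hseqS]; exact le_max_left _ _
      have h3 : seq (k + 1) < seq (k + 2) := hseqmono (k + 1)
      exact lt_of_le_of_lt (h1.trans h2) (h3.trans_le (Ordinal.le_iSup seq (k + 2)))
    · have h1 : δ < seq 0 := by
        rw [hseq0]
        exact lt_of_le_of_lt (le_max_left δ α₀)
          (by rw [Ordinal.add_one_eq_succ]; exact Order.lt_succ _)
      exact h1.trans_le (Ordinal.le_iSup seq 0)
  · -- closed
    rintro S hS ⟨s0, hs0⟩ hsup
    have hbdd : BddAbove S := ⟨omega1, fun x hx => le_of_lt (hS hx).2.1⟩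
    refine ⟨lt_of_lt_of_le (hS hs0).1 (le_csSup hbdd hs0), hsup, ?_⟩
    intro β hβ
    obtain ⟨s, hsS, hβs⟩ := (lt_csSup_iff hbdd ⟨s0, hs0⟩).mp hβ
    exact lt_of_lt_of_le ((hS hsS).2.2 β hβs) (le_csSup hbdd hsS)
  · -- at each α in the club
    rintro α hα ⟨hα₀α, hαω, hαcl⟩
    have h0 : (0 : Ordinal.{0}) < α := lt_of_le_of_lt (zero_le (a := α₀)) hα₀α
    have hsucc : ∀ β < α, β + 1 < α := fun β hβ => lt_of_le_of_lt (hgsucc β) (hαcl β hβ)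
    constructor
    · -- dimension ≤ n
      intro 𝒲 hWfin hWop hWcov
      set 𝒰 := (fun W => projX X α hα ⁻¹' W) '' 𝒲 with h𝒰
      have hUcov : ⋃₀ 𝒰 = univ := sUnion_preimage_univ hWcov
      have hUform : ∀ U ∈ 𝒰, ∃ Gg : Set (Jdx α → unitInterval), IsOpen Gg ∧
          U = (fun z : ↥X => resf α hα z.1) ⁻¹' Gg := by
        rintro U ⟨W, hW, rfl⟩
        obtain ⟨Gg, hGg, hGW⟩ := isOpen_induced_iff.mp (hWop W hW)
        exact ⟨Gg, hGg, by rw [← hGW]; rfl⟩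
      obtain ⟨β, hβα, 𝒞, hCfin, hCsub, hCcov, hCref⟩ := BR X hX hα h0 hsucc 𝒰 hUcov hUform
      have hβω : β < omega1 := hβα.trans hαω
      have hGood𝒞 : Good 𝒞 := ⟨hCfin, fun S hS => cyls_isOpen X (hCsub hS), hCcov⟩
      have hγα : Gf 𝒞 hGood𝒞 < α := by
        have h1 : G 𝒞 = Gf 𝒞 hGood𝒞 := by rw [hGdef]; simp only [dif_pos hGood𝒞]
        haveI := (hCovCt β hβω).to_subtype
        have h2 : G 𝒞 ≤ ⨆ 𝒟 : ↥(CovFam β), G 𝒟.1 :=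
          Ordinal.le_iSup (fun 𝒟 : ↥(CovFam β) => G 𝒟.1) ⟨𝒞, hCsub, hGood𝒞⟩
        have h3 : G 𝒞 ≤ g β := h2.trans (le_max_left _ _)
        rw [h1] at h3
        exact lt_of_le_of_lt h3 (hαcl β hβα)
      set γ := Gf 𝒞 hGood𝒞 with hγdef
      have hγω : γ < omega1 := hGlt 𝒞 hGood𝒞
      set π := projX2 X γ α (le_of_lt hγα) hα hγω with hπ
      obtain ⟨hPfin, hPop, hPcov, hPord⟩ :=
        pullback_cover (projX2_cont X γ α (le_of_lt hγα) hα hγω) ((n : ℤ) + 1)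
          (h𝒪fin 𝒞 hGood𝒞) (h𝒪op 𝒞 hGood𝒞) (h𝒪cov 𝒞 hGood𝒞) (h𝒪ord 𝒞 hGood𝒞)
      refine ⟨(π ⁻¹' ·) '' 𝒪f 𝒞 hGood𝒞, hPfin, hPop, hPcov, ?_, hPord⟩
      rintro V ⟨O, hO, rfl⟩
      obtain ⟨S, hS, hOS⟩ := h𝒪ref 𝒞 hGood𝒞 O hO
      obtain ⟨U, hU, hSU⟩ := hCref S hS
      obtain ⟨W, hW, rfl⟩ := hU
      refine ⟨W, hW, ?_⟩
      intro y hy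
      obtain ⟨x, rfl⟩ := projX_surj X α hα y
      have hx : x ∈ projX X γ hγω ⁻¹' O := hy
      exact hSU (hOS hx)
    · -- dimension > n - 1
      intro hcd
      set π₀ := projX2 X α₀ α (le_of_lt hα₀α) hα hα₀ with hπ₀
      obtain ⟨𝒱, hv1, hv2, hv3, hv4, hv5⟩ := hcd ((π₀ ⁻¹' ·) '' 𝒪₀)
        (hO0fin.image _)
        (by rintro P ⟨O, hO, rfl⟩
            exact (hO0op O hO).preimage (projX2_cont X α₀ α (le_of_lt hα₀α) hα hα₀))
        (sUnion_preimage_univ hO0cov)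
      obtain ⟨hQfin, hQop, hQcov, hQord⟩ :=
        pullback_cover (projX_cont X α hα) ((n : ℤ) - 1 + 1) hv1 hv2 hv3 hv5
      apply hU0bad ((projX X α hα ⁻¹' ·) '' 𝒱) hQfin hQop hQcov ?_ hQord
      rintro V' ⟨V, hV, rfl⟩
      obtain ⟨P, hP, hVP⟩ := hv4 V hV
      obtain ⟨O, hO, rfl⟩ := hP
      obtain ⟨U, hU, hOU⟩ := hO0ref O hO
      refine ⟨U, hU, ?_⟩
      intro x hx
      have : projX X α₀ hα₀ x ∈ O := hVP hx
      exact hOU this
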